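/- Let X be a real separable reflexive Banach space with sequences (e_l) ⊂ X and (e_l*) ⊂ X* such that X is the closed linear span of {e_l : l ∈ ℕ}, the weak-star closed linear span of {e_l* : l ∈ ℕ} is X*, and ⟨e_i*, e_l⟩ equals 1 if i = l and 0 otherwise. For j ∈ ℕ set Z_j := the closed linear span of {e_j, e_{j+1}, …}. Let Ξ : X → ℝ be weakly-strongly continuous (i.e. if u_k converges weakly to u in X then Ξ(u_k) → Ξ(u)) with Ξ(0) = 0, and let τ > 0. Then for each j ∈ ℕ the quantity α_j := sup{ |Ξ(u)| : u ∈ Z_j, ‖u‖_X ≤ τ } is finite, and α_j → 0 as j → ∞. -/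

import Mathlib

open MeasureTheory Set Filter Topology
open scoped ENNReal NNReal

noncomputable section

section Aux

variable {X : Type*} [NormedAddCommGroup X] [NormedSpace ℝ X]

/-- The span of the `estar` is norm-dense in the dual, using reflexivity and weak-star density. -/
lemma aux_dense_span_dual (estar : ℕ → WeakDual ℝ X)
    (hrefl : Function.Surjective (⇑(NormedSpace.inclusionInDoubleDual ℝ X)))
    (hspanX' : Dense ((Submodule.span ℝ (Set.range estar) :
      Submodule ℝ (WeakDual ℝ X)) : Set (WeakDual ℝ X))) :
    Dense ((Submodule.span ℝ (Set.range fun i => WeakDual.toStrongDual (estar i)) :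
      Submodule ℝ (StrongDual ℝ X)) : Set (StrongDual ℝ X)) := by
  set N : Submodule ℝ (StrongDual ℝ X) :=
    Submodule.span ℝ (Set.range fun i => WeakDual.toStrongDual (estar i)) with hN
  rw [Submodule.dense_iff_topologicalClosure_eq_top]
  by_contra hM
  have hex : ∃ f : StrongDual ℝ X, f ∉ N.topologicalClosure := by
    by_contra h
    push_neg at h
    exact hM (Submodule.eq_top_iff'.2 h)
  obtain ⟨f, hf⟩ := hex
  obtain ⟨Φ, u, hΦ1, hΦ2⟩ := geometric_hahn_banach_closed_point
    (N.topologicalClosure.convex (𝕜 := ℝ)) N.isClosed_topologicalClosure hf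
  have hu0 : 0 < u := by
    have := hΦ1 0 N.topologicalClosure.zero_mem
    simpa using this
  have hzero : ∀ a ∈ N.topologicalClosure, Φ a = 0 := by
    intro a ha
    by_contra hne
    have h1 : Φ (((u + 1) / Φ a) • a) < u := hΦ1 _ (N.topologicalClosure.smul_mem _ ha)
    rw [Φ.map_smul, smul_eq_mul, div_mul_cancel₀ _ hne] at h1
    linarith
  obtain ⟨x, hx⟩ := hrefl Φ
  have hx' : ∀ g : StrongDual ℝ X, Φ g = g x := fun g => by
    rw [← hx]; exact NormedSpace.dual_def ℝ X x g
  have hestar0 : ∀ i, estar i x = 0 := by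
    intro i
    have h0 : Φ (WeakDual.toStrongDual (estar i)) = 0 :=
      hzero _ (N.le_topologicalClosure (Submodule.subset_span ⟨i, rfl⟩))
    rw [hx'] at h0
    exact h0
  -- evaluation at x as a linear map on the weak dual
  let ev : WeakDual ℝ X →ₗ[ℝ] ℝ :=
    { toFun := fun g => g x
      map_add' := fun g h => rfl
      map_smul' := fun c g => rfl }
  have hker : (Submodule.span ℝ (Set.range estar)) ≤ LinearMap.ker ev := by
    rw [Submodule.span_le]
    rintro _ ⟨i, rfl⟩
    exact LinearMap.mem_ker.2 (hestar0 i)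
  have hclosed : IsClosed {g : WeakDual ℝ X | g x = 0} :=
    isClosed_singleton.preimage (WeakDual.eval_continuous x)
  have hall : ∀ g : WeakDual ℝ X, g x = 0 := by
    intro g
    have hsub : (Submodule.span ℝ (Set.range estar) : Set (WeakDual ℝ X))
        ⊆ {g : WeakDual ℝ X | g x = 0} := fun a ha => LinearMap.mem_ker.1 (hker ha)
    have huniv : (univ : Set (WeakDual ℝ X)) ⊆ {g : WeakDual ℝ X | g x = 0} := by
      rw [← hspanX'.closure_eq]
      exact closure_minimal hsub hclosed
    exact huniv (mem_univ g)
  have hfx : Φ f = 0 := by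
    rw [hx']
    exact hall (StrongDual.toWeakDual f)
  linarith

/-- If all the `estar i` coordinates of a bounded sequence converge to those of `u`,
then the sequence converges weakly to `u`. -/
lemma aux_forall_tendsto (estar : ℕ → WeakDual ℝ X)
    (hdense : Dense ((Submodule.span ℝ (Set.range fun i => WeakDual.toStrongDual (estar i)) :
      Submodule ℝ (StrongDual ℝ X)) : Set (StrongDual ℝ X)))
    (U : ℕ → X) (u : X) (C : ℝ) (hU : ∀ k, ‖U k‖ ≤ C)
    (hgen : ∀ i, Tendsto (fun k => estar i (U k)) atTop (𝓝 (estar i u))) :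
    ∀ f : StrongDual ℝ X, Tendsto (fun k => f (U k)) atTop (𝓝 (f u)) := by
  have hC : 0 ≤ C := le_trans (norm_nonneg _) (hU 0)
  set B : ℝ := C + ‖u‖ + 1 with hB
  have hBpos : 0 < B := by positivity
  let A : Submodule ℝ (StrongDual ℝ X) :=
    { carrier := {f | Tendsto (fun k => f (U k)) atTop (𝓝 (f u))}
      add_mem' := by
        rintro f g hf hg
        have := hf.add hg
        simpa [ContinuousLinearMap.add_apply] using this
      zero_mem' := by simp [tendsto_const_nhds]
      smul_mem' := by
        rintro c f hf
        have := hf.const_mul c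
        simpa [ContinuousLinearMap.smul_apply, smul_eq_mul] using this }
  have hmemA : ∀ f : StrongDual ℝ X,
      f ∈ A ↔ Tendsto (fun k => f (U k)) atTop (𝓝 (f u)) := fun f => Iff.rfl
  have hclosed : IsClosed (A : Set (StrongDual ℝ X)) := by
    refine isClosed_of_closure_subset ?_
    intro f hf
    rw [SetLike.mem_coe, hmemA, Metric.tendsto_atTop]
    intro ε hε
    obtain ⟨g, hgA, hfg⟩ : ∃ g ∈ (A : Set (StrongDual ℝ X)), dist f g < ε / (3 * B) := by
      rw [Metric.mem_closure_iff] at hf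
      exact hf _ (by positivity)
    rw [dist_eq_norm] at hfg
    have hgt : Tendsto (fun k => g (U k)) atTop (𝓝 (g u)) := hgA
    rw [Metric.tendsto_atTop] at hgt
    obtain ⟨Nn, hNn⟩ := hgt (ε / 3) (by linarith)
    refine ⟨Nn, fun n hn => ?_⟩
    have h1 : |f (U n) - g (U n)| ≤ ‖f - g‖ * C := by
      have := (f - g).le_opNorm (U n)
      rw [ContinuousLinearMap.sub_apply, Real.norm_eq_abs] at this
      nlinarith [norm_nonneg (f - g), hU n]
    have h2 : |f u - g u| ≤ ‖f - g‖ * ‖u‖ := by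
      have := (f - g).le_opNorm u
      rw [ContinuousLinearMap.sub_apply, Real.norm_eq_abs] at this
      exact this
    have h3 : |g (U n) - g u| < ε / 3 := by
      have := hNn n hn
      rwa [Real.dist_eq] at this
    have hfgB : ‖f - g‖ * B < ε / 3 := by
      have h4 : ‖f - g‖ * B < (ε / (3 * B)) * B := by
        exact mul_lt_mul_of_pos_right hfg hBpos
      have h5 : (ε / (3 * B)) * B = ε / 3 := by
        field_simp
      linarith
    have hfg0 : 0 ≤ ‖f - g‖ := norm_nonneg _
    rw [Real.dist_eq]
    have htri : |f (U n) - f u| ≤ |f (U n) - g (U n)| + |g (U n) - g u| + |g u - f u| := by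
      have := abs_sub_le (f (U n)) (g (U n)) (f u)
      have := abs_sub_le (g (U n)) (g u) (f u)
      calc |f (U n) - f u| ≤ |f (U n) - g (U n)| + |g (U n) - f u| :=
            abs_sub_le (f (U n)) (g (U n)) (f u)
        _ ≤ |f (U n) - g (U n)| + (|g (U n) - g u| + |g u - f u|) := by
            have := abs_sub_le (g (U n)) (g u) (f u)
            linarith
        _ = |f (U n) - g (U n)| + |g (U n) - g u| + |g u - f u| := by ring
    have h2' : |g u - f u| ≤ ‖f - g‖ * ‖u‖ := by
      rw [abs_sub_comm]; exact h2
    have hsum : ‖f - g‖ * C + ‖f - g‖ * ‖u‖ ≤ ‖f - g‖ * B := by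
      rw [hB]; nlinarith
    linarith
  have hrange : (Set.range fun i => WeakDual.toStrongDual (estar i))
      ⊆ (A : Set (StrongDual ℝ X)) := by
    rintro _ ⟨i, rfl⟩
    exact hgen i
  have hspanA : (Submodule.span ℝ (Set.range fun i => WeakDual.toStrongDual (estar i))
      : Set (StrongDual ℝ X)) ⊆ (A : Set (StrongDual ℝ X)) := by
    intro a ha
    exact Submodule.span_le.2 hrange ha
  intro f
  have : f ∈ (A : Set (StrongDual ℝ X)) := by
    have huniv : (univ : Set (StrongDual ℝ X)) ⊆ (A : Set (StrongDual ℝ X)) := by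
      rw [← hdense.closure_eq]
      exact closure_minimal hspanA hclosed
    exact huniv (mem_univ f)
  exact this

/-- If all the `estar i` coordinates of a bounded sequence converge,
then all functionals applied to the sequence converge. -/
lemma aux_forall_exlim (estar : ℕ → WeakDual ℝ X)
    (hdense : Dense ((Submodule.span ℝ (Set.range fun i => WeakDual.toStrongDual (estar i)) :
      Submodule ℝ (StrongDual ℝ X)) : Set (StrongDual ℝ X)))
    (U : ℕ → X) (C : ℝ) (hU : ∀ k, ‖U k‖ ≤ C)
    (hgen : ∀ i, ∃ l, Tendsto (fun k => estar i (U k)) atTop (𝓝 l)) :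
    ∀ f : StrongDual ℝ X, ∃ l, Tendsto (fun k => f (U k)) atTop (𝓝 l) := by
  have hC : 0 ≤ C := le_trans (norm_nonneg _) (hU 0)
  have hBpos : (0:ℝ) < C + 1 := by linarith
  let A : Submodule ℝ (StrongDual ℝ X) :=
    { carrier := {f | ∃ l, Tendsto (fun k => f (U k)) atTop (𝓝 l)}
      add_mem' := by
        rintro f g ⟨lf, hf⟩ ⟨lg, hg⟩
        exact ⟨lf + lg, by simpa [ContinuousLinearMap.add_apply] using hf.add hg⟩
      zero_mem' := ⟨0, by simp [tendsto_const_nhds]⟩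
      smul_mem' := by
        rintro c f ⟨l, hf⟩
        exact ⟨c * l, by simpa [ContinuousLinearMap.smul_apply, smul_eq_mul]
          using hf.const_mul c⟩ }
  have hmemA : ∀ f : StrongDual ℝ X,
      f ∈ A ↔ ∃ l, Tendsto (fun k => f (U k)) atTop (𝓝 l) := fun f => Iff.rfl
  have hclosed : IsClosed (A : Set (StrongDual ℝ X)) := by
    refine isClosed_of_closure_subset ?_
    intro f hf
    rw [SetLike.mem_coe, hmemA]
    have hcauchy : CauchySeq (fun k => f (U k)) := by
      rw [Metric.cauchySeq_iff]
      intro ε hε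
      obtain ⟨g, hgA, hfg⟩ : ∃ g ∈ (A : Set (StrongDual ℝ X)),
          dist f g < ε / (3 * (C + 1)) := by
        rw [Metric.mem_closure_iff] at hf
        exact hf _ (by positivity)
      rw [dist_eq_norm] at hfg
      obtain ⟨l, hl⟩ := hgA
      have hgC : CauchySeq (fun k => g (U k)) := hl.cauchySeq
      rw [Metric.cauchySeq_iff] at hgC
      obtain ⟨Nn, hNn⟩ := hgC (ε / 3) (by linarith)
      refine ⟨Nn, fun m hm n hn => ?_⟩
      have hbd : ∀ k, |f (U k) - g (U k)| ≤ ‖f - g‖ * C := by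
        intro k
        have := (f - g).le_opNorm (U k)
        rw [ContinuousLinearMap.sub_apply, Real.norm_eq_abs] at this
        nlinarith [norm_nonneg (f - g), hU k]
      have h3 : |g (U m) - g (U n)| < ε / 3 := by
        have := hNn m hm n hn
        rwa [Real.dist_eq] at this
      have hfgB : ‖f - g‖ * (C + 1) < ε / 3 := by
        have h4 : ‖f - g‖ * (C + 1) < (ε / (3 * (C + 1))) * (C + 1) :=
          mul_lt_mul_of_pos_right hfg hBpos
        have h5 : (ε / (3 * (C + 1))) * (C + 1) = ε / 3 := by field_simp
        linarith
      have hfg0 : 0 ≤ ‖f - g‖ := norm_nonneg _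
      rw [Real.dist_eq]
      have h1 := hbd m
      have h2 := hbd n
      have htri : |f (U m) - f (U n)|
          ≤ |f (U m) - g (U m)| + |g (U m) - g (U n)| + |g (U n) - f (U n)| := by
        calc |f (U m) - f (U n)| ≤ |f (U m) - g (U m)| + |g (U m) - f (U n)| :=
              abs_sub_le _ _ _
          _ ≤ |f (U m) - g (U m)| + (|g (U m) - g (U n)| + |g (U n) - f (U n)|) := by
              have := abs_sub_le (g (U m)) (g (U n)) (f (U n))
              linarith
          _ = _ := by ring
      have h2' : |g (U n) - f (U n)| ≤ ‖f - g‖ * C := by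
        rw [abs_sub_comm]; exact h2
      nlinarith
    exact cauchySeq_tendsto_of_complete hcauchy
  have hrange : (Set.range fun i => WeakDual.toStrongDual (estar i))
      ⊆ (A : Set (StrongDual ℝ X)) := by
    rintro _ ⟨i, rfl⟩
    exact hgen i
  intro f
  have : f ∈ (A : Set (StrongDual ℝ X)) := by
    have huniv : (univ : Set (StrongDual ℝ X)) ⊆ (A : Set (StrongDual ℝ X)) := by
      rw [← hdense.closure_eq]
      exact closure_minimal (fun a ha => Submodule.span_le.2 hrange ha) hclosed
    exact huniv (mem_univ f)
  exact this

/-- Weak sequential compactness of bounded sequences. -/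
lemma aux_weak_seq_compact (estar : ℕ → WeakDual ℝ X)
    (hrefl : Function.Surjective (⇑(NormedSpace.inclusionInDoubleDual ℝ X)))
    (hdense : Dense ((Submodule.span ℝ (Set.range fun i => WeakDual.toStrongDual (estar i)) :
      Submodule ℝ (StrongDual ℝ X)) : Set (StrongDual ℝ X)))
    (U : ℕ → X) (C : ℝ) (hC : 0 ≤ C) (hU : ∀ k, ‖U k‖ ≤ C) :
    ∃ φ : ℕ → ℕ, StrictMono φ ∧ ∃ v : X,
      ∀ f : StrongDual ℝ X, Tendsto (fun k => f (U (φ k))) atTop (𝓝 (f v)) := by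
  set T : ℕ → (ℕ → ℝ) := fun k i => estar i (U k) with hT
  set s : Set (ℕ → ℝ) := univ.pi fun i =>
    Icc (-(‖WeakDual.toStrongDual (estar i)‖ * C)) (‖WeakDual.toStrongDual (estar i)‖ * C)
    with hs
  have hcomp : IsCompact s := isCompact_univ_pi fun i => isCompact_Icc
  have hmem : ∀ k, T k ∈ s := by
    intro k
    rw [hs, mem_univ_pi]
    intro i
    have h1 := (WeakDual.toStrongDual (estar i)).le_opNorm (U k)
    rw [Real.norm_eq_abs] at h1
    have h2 : |estar i (U k)| ≤ ‖WeakDual.toStrongDual (estar i)‖ * C := by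
      have := mul_le_mul_of_nonneg_left (hU k) (norm_nonneg (WeakDual.toStrongDual (estar i)))
      exact le_trans h1 this
    exact abs_le.1 h2
  obtain ⟨c, -, φ, hφ, hconv⟩ := hcomp.tendsto_subseq hmem
  have hcoord : ∀ i, Tendsto (fun k => estar i (U (φ k))) atTop (𝓝 (c i)) := by
    intro i
    have := ((continuous_apply i).tendsto c).comp hconv
    exact this
  have hUφ : ∀ k, ‖U (φ k)‖ ≤ C := fun k => hU (φ k)
  have hex : ∀ f : StrongDual ℝ X, ∃ l, Tendsto (fun k => f (U (φ k))) atTop (𝓝 l) :=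
    aux_forall_exlim estar hdense (fun k => U (φ k)) C hUφ (fun i => ⟨c i, hcoord i⟩)
  choose L hL using hex
  have Ladd : ∀ f g : StrongDual ℝ X, L (f + g) = L f + L g := by
    intro f g
    refine tendsto_nhds_unique (hL (f + g)) ?_
    have := (hL f).add (hL g)
    simpa [ContinuousLinearMap.add_apply] using this
  have Lsmul : ∀ (a : ℝ) (f : StrongDual ℝ X), L (a • f) = a * L f := by
    intro a f
    refine tendsto_nhds_unique (hL (a • f)) ?_
    have := (hL f).const_mul a
    simpa [ContinuousLinearMap.smul_apply, smul_eq_mul] using this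
  let Φ₀ : StrongDual ℝ X →ₗ[ℝ] ℝ :=
    { toFun := L
      map_add' := Ladd
      map_smul' := Lsmul }
  have hbound : ∀ f : StrongDual ℝ X, ‖Φ₀ f‖ ≤ C * ‖f‖ := by
    intro f
    rw [Real.norm_eq_abs]
    have h1 : Tendsto (fun k => |f (U (φ k))|) atTop (𝓝 |L f|) := (hL f).abs
    refine le_of_tendsto h1 (Eventually.of_forall fun k => ?_)
    have h2 := f.le_opNorm (U (φ k))
    rw [Real.norm_eq_abs] at h2
    calc |f (U (φ k))| ≤ ‖f‖ * ‖U (φ k)‖ := h2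
      _ ≤ ‖f‖ * C := mul_le_mul_of_nonneg_left (hU _) (norm_nonneg f)
      _ = C * ‖f‖ := mul_comm _ _
  let Φ : StrongDual ℝ (StrongDual ℝ X) := LinearMap.mkContinuous Φ₀ C hbound
  obtain ⟨v, hv⟩ := hrefl Φ
  refine ⟨φ, hφ, v, fun f => ?_⟩
  have hfv : f v = L f := by
    have h1 : NormedSpace.inclusionInDoubleDual ℝ X v f = f v := NormedSpace.dual_def ℝ X v f
    rw [hv] at h1
    exact h1.symm
  rw [hfv]
  exact hL f

end Aux

theorem weak_strong_sup_tendsto_zero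
    (X : Type*) [NormedAddCommGroup X] [NormedSpace ℝ X] [CompleteSpace X]
    [TopologicalSpace.SeparableSpace X]
    (hrefl : Function.Surjective (⇑(NormedSpace.inclusionInDoubleDual ℝ X)))
    (e : ℕ → X) (estar : ℕ → WeakDual ℝ X)
    (hspanX : Dense ((Submodule.span ℝ (Set.range e) : Submodule ℝ X) : Set X))
    (hspanX' : Dense ((Submodule.span ℝ (Set.range estar) :
      Submodule ℝ (WeakDual ℝ X)) : Set (WeakDual ℝ X)))
    (hdual : ∀ i l : ℕ, estar i (e l) = if i = l then (1:ℝ) else 0)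
    (Ξ : X → ℝ) (hΞ0 : Ξ 0 = 0)
    (hΞ : ∀ (U : ℕ → X) (u : X),
      (∀ φ : StrongDual ℝ X,
        Filter.Tendsto (fun k => φ (U k)) Filter.atTop (𝓝 (φ u))) →
      Filter.Tendsto (fun k => Ξ (U k)) Filter.atTop (𝓝 (Ξ u)))
    (τ : ℝ) (hτ : 0 < τ) :
    (∀ j : ℕ, BddAbove {rr : ℝ | ∃ u : X,
        u ∈ closure ((Submodule.span ℝ (e '' Set.Ici j) : Submodule ℝ X) : Set X) ∧
        ‖u‖ ≤ τ ∧ rr = |Ξ u|}) ∧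
    Filter.Tendsto (fun j => sSup {rr : ℝ | ∃ u : X,
        u ∈ closure ((Submodule.span ℝ (e '' Set.Ici j) : Submodule ℝ X) : Set X) ∧
        ‖u‖ ≤ τ ∧ rr = |Ξ u|}) Filter.atTop (𝓝 0) := by
  have hdense := aux_dense_span_dual estar hrefl hspanX'
  set S : ℕ → Set ℝ := fun j => {rr : ℝ | ∃ u : X,
      u ∈ closure ((Submodule.span ℝ (e '' Set.Ici j) : Submodule ℝ X) : Set X) ∧
      ‖u‖ ≤ τ ∧ rr = |Ξ u|} with hSdef
  -- vanishing of estar i on Z_j for i < j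
  have hvanish : ∀ i j : ℕ, i < j → ∀ u : X,
      u ∈ closure ((Submodule.span ℝ (e '' Set.Ici j) : Submodule ℝ X) : Set X) →
      estar i u = 0 := by
    intro i j hij u hu
    have h1 : (Submodule.span ℝ (e '' Set.Ici j) : Submodule ℝ X)
        ≤ LinearMap.ker ((WeakDual.toStrongDual (estar i) : X →L[ℝ] ℝ) : X →ₗ[ℝ] ℝ) := by
      rw [Submodule.span_le]
      rintro _ ⟨l, hl, rfl⟩
      have hne : i ≠ l := (hij.trans_le hl).ne
      refine LinearMap.mem_ker.2 ?_
      have := hdual i l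
      rw [if_neg hne] at this
      exact this
    have h2 : closure ((Submodule.span ℝ (e '' Set.Ici j) : Submodule ℝ X) : Set X)
        ⊆ (LinearMap.ker ((WeakDual.toStrongDual (estar i) : X →L[ℝ] ℝ) : X →ₗ[ℝ] ℝ) : Set X) :=
      closure_minimal h1 (ContinuousLinearMap.isClosed_ker _)
    exact LinearMap.mem_ker.1 (h2 hu)
  -- 0 ∈ S j
  have hzero_mem : ∀ j, (0:ℝ) ∈ S j := by
    intro j
    refine ⟨0, subset_closure (Submodule.zero_mem _), by simpa using hτ.le, ?_⟩
    rw [hΞ0, abs_zero]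
  have hnonempty : ∀ j, (S j).Nonempty := fun j => ⟨0, hzero_mem j⟩
  -- S antitone
  have hsub : ∀ j j' : ℕ, j ≤ j' → S j' ⊆ S j := by
    intro j j' hjj rr hrr
    obtain ⟨u, hu, hun, hr⟩ := hrr
    refine ⟨u, ?_, hun, hr⟩
    refine closure_mono ?_ hu
    exact Submodule.span_mono (Set.image_mono (Set.Ici_subset_Ici.2 hjj))
  -- BddAbove
  have hbdd : ∀ j, BddAbove (S j) := by
    intro j
    by_contra hnb
    rw [not_bddAbove_iff] at hnb
    have hU : ∀ n : ℕ, ∃ u : X,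
        u ∈ closure ((Submodule.span ℝ (e '' Set.Ici j) : Submodule ℝ X) : Set X) ∧
        ‖u‖ ≤ τ ∧ (n : ℝ) < |Ξ u| := by
      intro n
      obtain ⟨rr, hrr, hlt⟩ := hnb (n : ℝ)
      obtain ⟨u, hu, hun, hr⟩ := hrr
      exact ⟨u, hu, hun, hr ▸ hlt⟩
    choose U hU1 hU2 hU3 using hU
    obtain ⟨φ, hφ, v, hweak⟩ := aux_weak_seq_compact estar hrefl hdense U τ hτ.le hU2
    have hΞconv : Tendsto (fun k => Ξ (U (φ k))) atTop (𝓝 (Ξ v)) :=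
      hΞ (fun k => U (φ k)) v hweak
    have habs : Tendsto (fun k => |Ξ (U (φ k))|) atTop (𝓝 |Ξ v|) := hΞconv.abs
    have hdiv : Tendsto (fun k => |Ξ (U (φ k))|) atTop atTop := by
      refine tendsto_atTop_mono (fun k => ?_) tendsto_natCast_atTop_atTop
      have h1 : ((k : ℕ) : ℝ) ≤ ((φ k : ℕ) : ℝ) := Nat.cast_le.2 hφ.le_apply
      exact le_trans h1 (hU3 (φ k)).le
    exact not_tendsto_atTop_of_tendsto_nhds habs hdiv
  refine ⟨hbdd, ?_⟩
  -- nonnegativity of sSup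
  have hsup_nonneg : ∀ j, 0 ≤ sSup (S j) := fun j => le_csSup (hbdd j) (hzero_mem j)
  -- smallness
  have hsmall : ∀ ε : ℝ, 0 < ε → ∃ N : ℕ, sSup (S N) < ε := by
    intro ε hε
    by_contra hno
    push_neg at hno
    have hU : ∀ j : ℕ, ∃ u : X,
        u ∈ closure ((Submodule.span ℝ (e '' Set.Ici j) : Submodule ℝ X) : Set X) ∧
        ‖u‖ ≤ τ ∧ ε / 2 < |Ξ u| := by
      intro j
      have h1 : ε / 2 < sSup (S j) := lt_of_lt_of_le (by linarith) (hno j)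
      obtain ⟨rr, hrr, hlt⟩ := exists_lt_of_lt_csSup (hnonempty j) h1
      obtain ⟨u, hu, hun, hr⟩ := hrr
      exact ⟨u, hu, hun, hr ▸ hlt⟩
    choose U hU1 hU2 hU3 using hU
    have hgen : ∀ i, Tendsto (fun j => estar i (U j)) atTop (𝓝 (estar i 0)) := by
      intro i
      rw [map_zero]
      refine Tendsto.congr' ?_ tendsto_const_nhds
      filter_upwards [eventually_ge_atTop (i + 1)] with j hj
      exact (hvanish i j (Nat.lt_of_lt_of_le (Nat.lt_succ_self i) hj) (U j) (hU1 j)).symm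
    have hweak : ∀ f : StrongDual ℝ X, Tendsto (fun j => f (U j)) atTop (𝓝 (f 0)) :=
      aux_forall_tendsto estar hdense U 0 τ hU2 hgen
    have hΞconv : Tendsto (fun j => Ξ (U j)) atTop (𝓝 (Ξ 0)) := hΞ U 0 hweak
    rw [hΞ0] at hΞconv
    rw [Metric.tendsto_atTop] at hΞconv
    obtain ⟨N, hN⟩ := hΞconv (ε / 2) (by linarith)
    have := hN N le_rfl
    rw [Real.dist_eq, sub_zero] at this
    exact absurd this (not_lt.2 (hU3 N).le)
  -- conclude
  rw [Metric.tendsto_atTop]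
  intro ε hε
  obtain ⟨N, hN⟩ := hsmall ε hε
  refine ⟨N, fun n hn => ?_⟩
  rw [Real.dist_eq, sub_zero, abs_of_nonneg (hsup_nonneg n)]
  calc sSup (S n) ≤ sSup (S N) := csSup_le_csSup (hbdd N) (hnonempty n) (hsub N n hn)
    _ < ε := hN

end
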